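/- Suppose f(x) - g(y) divides (x^q - x)f'(x) - (y^q - y)g'(y) in F_q[x,y], where f, g ∈ F_q[x] are nonconstant and f(x) - g(y) ∉ F_q[x^p, y^p]. Then there exist a monic polynomial T ∈ F_q[x] and θ ∈ F_q* such that T(f(x)) = θ(x^q - x)f'(x) and T(g(y)) = θ(y^q - y)g'(y). -/

import Mathlib

open Polynomial

lemma fm_expand {K : Type*} [Field K] {fm : K[X]} (hm : fm.Monic) (hdeg : 0 < fm.degree) :
    ∀ (n : ℕ) (a : K[X]), a.natDegree < n →
      ∃ (N : ℕ) (c : ℕ → K[X]), (∀ i, (c i).degree < fm.degree) ∧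
        a = ∑ i ∈ Finset.range N, c i * fm ^ i := by
  intro n
  induction n with
  | zero => exact fun a h => absurd h (Nat.not_lt_zero _)
  | succ n ih =>
    intro a ha
    by_cases hlt : a.degree < fm.degree
    · exact ⟨1, fun _ => a, fun _ => hlt, by simp⟩
    · have ha0 : a ≠ 0 := by
        rintro rfl
        exact hlt (lt_of_le_of_lt bot_le hdeg)
      have key : a %ₘ fm + fm * (a /ₘ fm) = a := modByMonic_add_div a fm
      have ha1 : a /ₘ fm ≠ 0 := by
        intro h0
        rw [h0, mul_zero, add_zero] at key
        exact hlt (key ▸ degree_modByMonic_lt a hm)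
      have hlt2 : (a /ₘ fm).natDegree < a.natDegree :=
        natDegree_lt_natDegree ha1 (degree_divByMonic_lt a fm ha0 hdeg)
      obtain ⟨N, c, hc, hsum⟩ := ih (a /ₘ fm) (by omega)
      refine ⟨N + 1, fun i => Nat.casesOn i (a %ₘ fm) c, fun i => ?_, ?_⟩
      · cases i with
        | zero => exact degree_modByMonic_lt a hm
        | succ j => exact hc j
      · rw [Finset.sum_range_succ']
        conv_lhs => rw [← key, hsum]
        rw [Finset.mul_sum, add_comm]
        simp only [pow_zero, mul_one]
        congr 1
        exact Finset.sum_congr rfl fun i _ => by ring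

lemma fm_Fdeg {K : Type*} [Field K] (f : K[X]) (g : K[X]) (hf : 0 < f.natDegree) :
    (f.map (C : K →+* K[X]) - C g).degree = f.degree := by
  have hmapdeg : (f.map (C : K →+* K[X])).degree = f.degree :=
    degree_map_eq_of_injective C_injective f
  rw [degree_sub_eq_left_of_degree_lt, hmapdeg]
  rw [hmapdeg]
  exact lt_of_le_of_lt degree_C_le (natDegree_pos_iff_degree_pos.mp hf)

lemma fm_main {K : Type*} [Field K] (f g a b : K[X]) (hf : 0 < f.natDegree)
    (hg : 0 < g.natDegree)
    (hdvd : (f.map (C : K →+* K[X]) - C g) ∣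
      (a.map (C : K →+* K[X]) - C b : Polynomial K[X])) :
    ∃ T : K[X], T.comp f = a ∧ T.comp g = b := by
  have hf0 : f ≠ 0 := fun h => by simp [h] at hf
  have hfd : 0 < f.degree := natDegree_pos_iff_degree_pos.mp hf
  set u : K := f.leadingCoeff⁻¹ with hu
  have hu0 : u ≠ 0 := inv_ne_zero (leadingCoeff_ne_zero.mpr hf0)
  have hm : (f * C u).Monic := monic_mul_leadingCoeff_inv hf0
  have hmd : (f * C u).degree = f.degree := degree_mul_leadingCoeff_inv f hf0
  obtain ⟨N, c, hc, hsum⟩ := fm_expand hm (hmd ▸ hfd) (a.natDegree + 1) a (Nat.lt_succ_self _)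
  -- rewrite expansion in terms of f
  set d : ℕ → K[X] := fun i => c i * C (u ^ i) with hd
  have hdc : ∀ i, (d i).degree < f.degree := by
    intro i
    calc (c i * C (u ^ i)).degree ≤ (c i).degree + 0 :=
          le_trans (degree_mul_le _ _) (add_le_add_right degree_C_le _)
    _ = (c i).degree := by rw [add_zero]
    _ < f.degree := hmd ▸ hc i
  have hsum' : a = ∑ i ∈ Finset.range N, d i * f ^ i := by
    rw [hsum]
    refine Finset.sum_congr rfl fun i _ => ?_
    rw [hd, mul_pow, ← C_pow]
    ring
  clear hsum hc
  -- move to S = Polynomial K[X]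
  set F : Polynomial K[X] := f.map (C : K →+* K[X]) - C g with hF
  have hmapdeg : (f.map (C : K →+* K[X])).degree = f.degree :=
    degree_map_eq_of_injective C_injective f
  have hFdeg : F.degree = f.degree := by
    rw [hF, degree_sub_eq_left_of_degree_lt, hmapdeg]
    rw [hmapdeg]
    exact lt_of_le_of_lt degree_C_le hfd
  set U : Polynomial K[X] := ∑ i ∈ Finset.range N, (d i).map (C : K →+* K[X]) * C (g ^ i)
    with hU
  have hdvdU : F ∣ a.map (C : K →+* K[X]) - U := by
    have : a.map (C : K →+* K[X]) =
        ∑ i ∈ Finset.range N, (d i).map (C : K →+* K[X]) * (f.map (C : K →+* K[X])) ^ i := by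
      conv_lhs => rw [hsum']
      rw [Polynomial.map_sum]
      exact Finset.sum_congr rfl fun i _ => by rw [Polynomial.map_mul, Polynomial.map_pow]
    rw [this, hU, ← Finset.sum_sub_distrib]
    refine Finset.dvd_sum fun i _ => ?_
    rw [← mul_sub]
    exact Dvd.dvd.mul_left (by simpa using sub_dvd_pow_sub_pow (f.map (C : K →+* K[X])) (C g) i) _
  have hUb : U = C b := by
    have h1 : F ∣ U - C b := by
      have := dvd_sub hdvd hdvdU
      simpa using this
    have h2 : (U - C b).degree < F.degree := by
      rw [hFdeg]
      refine lt_of_le_of_lt (degree_sub_le _ _) (max_lt ?_ (lt_of_le_of_lt degree_C_le hfd))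
      refine lt_of_le_of_lt (degree_sum_le _ _) ?_
      rw [Finset.sup_lt_iff (lt_of_le_of_lt bot_le hfd)]
      intro i _
      calc ((d i).map (C : K →+* K[X]) * C (g ^ i)).degree
          ≤ ((d i).map (C : K →+* K[X])).degree + 0 :=
            le_trans (degree_mul_le _ _) (add_le_add_right degree_C_le _)
        _ = (d i).degree := by rw [add_zero, degree_map_eq_of_injective C_injective]
        _ < f.degree := hdc i
    exact sub_eq_zero.mp (eq_zero_of_dvd_of_degree_lt h1 h2)
  have hcoeff : ∀ j, (∑ i ∈ Finset.range N, C ((d i).coeff j) * g ^ i) = (C b : Polynomial K[X]).coeff j := by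
    intro j
    rw [← hUb, hU, finset_sum_coeff]
    exact Finset.sum_congr rfl fun i _ => by conv_rhs => rw [coeff_mul_C, coeff_map]
  have hdconst : ∀ i ∈ Finset.range N, ∀ j, 0 < j → (d i).coeff j = 0 := by
    intro i hi j hj
    have hPj : (∑ i ∈ Finset.range N, C ((d i).coeff j) * X ^ i : K[X]).comp g = 0 := by
      rw [sum_comp]
      have := hcoeff j
      rw [coeff_C, if_neg (Nat.pos_iff_ne_zero.mp hj)] at this
      rw [← this]
      exact Finset.sum_congr rfl fun i _ => by rw [mul_comp, C_comp, X_pow_comp]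
    have hP0 : (∑ i ∈ Finset.range N, C ((d i).coeff j) * X ^ i : K[X]) = 0 := by
      rcases comp_eq_zero_iff.mp hPj with h | ⟨_, h⟩
      · exact h
      · exfalso
        rw [h] at hg
        simp at hg
    have := congrArg (fun P => Polynomial.coeff P i) hP0
    simpa [finset_sum_coeff, coeff_C_mul, coeff_X_pow, Finset.sum_ite_eq' (Finset.range N),
      Finset.mem_range.mp hi] using this
  refine ⟨∑ i ∈ Finset.range N, C ((d i).coeff 0) * X ^ i, ?_, ?_⟩
  · rw [sum_comp]
    rw [hsum']
    refine Finset.sum_congr rfl fun i hi => ?_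
    rw [mul_comp, C_comp, X_pow_comp]
    congr 1
    ext j
    rcases Nat.eq_zero_or_pos j with rfl | hj
    · simp
    · rw [hdconst i hi j hj, coeff_C, if_neg (Nat.pos_iff_ne_zero.mp hj)]
  · rw [sum_comp]
    have := hcoeff 0
    rw [coeff_C, if_pos rfl] at this
    rw [← this]
    exact Finset.sum_congr rfl fun i _ => by rw [mul_comp, C_comp, X_pow_comp]

open MvPolynomial in
theorem stmt_9 {Fq : Type*} [Field Fq] [Fintype Fq]
    (p q : ℕ) [Fact p.Prime] [CharP Fq p] (hq : Fintype.card Fq = q)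
    (f g : Polynomial Fq) (hf : 0 < f.natDegree) (hg : 0 < g.natDegree)
    (hnp : ¬ ∃ G : MvPolynomial (Fin 2) Fq,
      (Polynomial.aeval (MvPolynomial.X 0) f - Polynomial.aeval (MvPolynomial.X 1) g
          : MvPolynomial (Fin 2) Fq) =
        MvPolynomial.aeval (fun i => MvPolynomial.X i ^ p) G)
    (hdvd : (Polynomial.aeval (MvPolynomial.X 0) f - Polynomial.aeval (MvPolynomial.X 1) g
          : MvPolynomial (Fin 2) Fq) ∣
      ((MvPolynomial.X 0 ^ q - MvPolynomial.X 0) *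
          Polynomial.aeval (MvPolynomial.X 0) (Polynomial.derivative f) -
        (MvPolynomial.X 1 ^ q - MvPolynomial.X 1) *
          Polynomial.aeval (MvPolynomial.X 1) (Polynomial.derivative g))) :
    ∃ (T : Polynomial Fq) (θ : Fq), T.Monic ∧ θ ≠ 0 ∧
      T.comp f = Polynomial.C θ * (Polynomial.X ^ q - Polynomial.X) *
        Polynomial.derivative f ∧
      T.comp g = Polynomial.C θ * (Polynomial.X ^ q - Polynomial.X) *
        Polynomial.derivative g := by
  have hp0 : p ≠ 0 := (Fact.out : p.Prime).ne_zero
  have hq2 : 1 < q := hq ▸ Fintype.one_lt_card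
  set a : Polynomial Fq := (Polynomial.X ^ q - Polynomial.X) * Polynomial.derivative f with ha
  set b : Polynomial Fq := (Polynomial.X ^ q - Polynomial.X) * Polynomial.derivative g with hb
  have hXq : (Polynomial.X ^ q - Polynomial.X : Polynomial Fq) ≠ 0 := by
    intro h
    have h2 := congrArg (fun P => Polynomial.coeff P q) h
    simp only [Polynomial.coeff_sub, Polynomial.coeff_X_pow, Polynomial.coeff_X, if_pos rfl,
      Polynomial.coeff_zero] at h2
    rw [if_neg (by omega : ¬(1 = q))] at h2
    simp at h2
  -- auxiliary evaluation lemmas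
  have haux : ∀ h : Polynomial Fq,
      Polynomial.aeval (Polynomial.X : Polynomial (Polynomial Fq)) h
        = h.map (Polynomial.C : Fq →+* Polynomial Fq) := by
    intro h
    have h2 := Polynomial.aeval_map_algebraMap (R := Fq) (A := Polynomial Fq)
      (B := Polynomial (Polynomial Fq)) (Polynomial.X : Polynomial (Polynomial Fq)) h
    rw [Polynomial.aeval_X_left_apply, Polynomial.algebraMap_eq] at h2
    exact h2.symm
  have haux2 : ∀ h : Polynomial Fq,
      Polynomial.aeval (Polynomial.C Polynomial.X : Polynomial (Polynomial Fq)) h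
        = Polynomial.C (h : Polynomial Fq) := by
    intro h
    have := Polynomial.aeval_algHom_apply (Polynomial.CAlgHom (R := Fq) (A := Polynomial Fq))
      Polynomial.X h
    simpa [Polynomial.aeval_X_left_apply] using this
  -- transfer hdvd via the two evaluations
  have hdvd1 : (f.map (Polynomial.C : Fq →+* Polynomial Fq) - Polynomial.C g) ∣
      (a.map (Polynomial.C : Fq →+* Polynomial Fq) - Polynomial.C b) := by
    have := map_dvd (MvPolynomial.aeval (R := Fq)
      ![(Polynomial.X : Polynomial (Polynomial Fq)), Polynomial.C Polynomial.X]) hdvd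
    rw [map_sub, map_sub, map_mul, map_mul, map_sub, map_sub, map_pow, map_pow] at this
    rw [← Polynomial.aeval_algHom_apply, ← Polynomial.aeval_algHom_apply,
      ← Polynomial.aeval_algHom_apply, ← Polynomial.aeval_algHom_apply] at this
    simp only [MvPolynomial.aeval_X, Matrix.cons_val_zero, Matrix.cons_val_one,
      Matrix.head_cons] at this
    rw [haux f, haux (Polynomial.derivative f), haux2 g, haux2 (Polynomial.derivative g)] at this
    convert this using 2
    · rw [ha, Polynomial.map_mul, Polynomial.map_sub, Polynomial.map_pow, Polynomial.map_X]
    · rw [hb, map_mul, map_sub, map_pow]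
  have hdvd2 : (Polynomial.C f - g.map (Polynomial.C : Fq →+* Polynomial Fq)) ∣
      (Polynomial.C a - b.map (Polynomial.C : Fq →+* Polynomial Fq)) := by
    have := map_dvd (MvPolynomial.aeval (R := Fq)
      ![Polynomial.C (Polynomial.X : Polynomial Fq), (Polynomial.X : Polynomial (Polynomial Fq))])
      hdvd
    rw [map_sub, map_sub, map_mul, map_mul, map_sub, map_sub, map_pow, map_pow] at this
    rw [← Polynomial.aeval_algHom_apply, ← Polynomial.aeval_algHom_apply,
      ← Polynomial.aeval_algHom_apply, ← Polynomial.aeval_algHom_apply] at this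
    simp only [MvPolynomial.aeval_X, Matrix.cons_val_zero, Matrix.cons_val_one,
      Matrix.head_cons] at this
    rw [haux g, haux (Polynomial.derivative g), haux2 f, haux2 (Polynomial.derivative f)] at this
    convert this using 2
    · rw [ha, map_mul, map_sub, map_pow]
    · rw [hb, Polynomial.map_mul, Polynomial.map_sub, Polynomial.map_pow, Polynomial.map_X]
  have hbothne : ¬ (Polynomial.derivative f = 0 ∧ Polynomial.derivative g = 0) := by
    rintro ⟨h1, h2⟩
    apply hnp
    have key : ∀ (h : Polynomial Fq), Polynomial.derivative h = 0 → ∀ i : Fin 2,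
        Polynomial.aeval (MvPolynomial.X i : MvPolynomial (Fin 2) Fq) h =
          MvPolynomial.aeval (R := Fq) (fun i => MvPolynomial.X i ^ p)
            (Polynomial.aeval (MvPolynomial.X i) (Polynomial.contract p h)) := by
      intro h hh i
      have e1 := Polynomial.aeval_algHom_apply
        (MvPolynomial.aeval (R := Fq) (fun i : Fin 2 => (MvPolynomial.X i : MvPolynomial (Fin 2) Fq) ^ p))
        (MvPolynomial.X i) (Polynomial.contract p h)
      rw [MvPolynomial.aeval_X] at e1
      rw [← e1, ← Polynomial.expand_aeval, Polynomial.expand_contract (p := p) hh hp0]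
    exact ⟨Polynomial.aeval (MvPolynomial.X 0) (Polynomial.contract p f) -
      Polynomial.aeval (MvPolynomial.X 1) (Polynomial.contract p g),
      by rw [map_sub, key f h1 0, key g h2 1]⟩
  have hf' : Polynomial.derivative f ≠ 0 := by
    intro h1
    have haz : a = 0 := by rw [ha, h1, mul_zero]
    have hC : (f.map (Polynomial.C : Fq →+* Polynomial Fq) - Polynomial.C g) ∣
        (Polynomial.C b : Polynomial (Polynomial Fq)) := by
      have h3 := hdvd1
      rw [haz] at h3
      simpa using h3.neg_right
    have hbz : (Polynomial.C b : Polynomial (Polynomial Fq)) = 0 :=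
      eq_zero_of_dvd_of_degree_lt hC
        (by rw [fm_Fdeg f g hf]
            exact lt_of_le_of_lt Polynomial.degree_C_le (natDegree_pos_iff_degree_pos.mp hf))
    have hb0 : b = 0 := by simpa using hbz
    have h2 : Polynomial.derivative g = 0 := by
      rcases mul_eq_zero.mp (hb ▸ hb0) with h | h
      · exact absurd h hXq
      · exact h
    exact hbothne ⟨h1, h2⟩
  have hg' : Polynomial.derivative g ≠ 0 := by
    intro h2
    have hbz : b = 0 := by rw [hb, h2, mul_zero]
    have hC : (Polynomial.C f - g.map (Polynomial.C : Fq →+* Polynomial Fq)) ∣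
        (Polynomial.C a : Polynomial (Polynomial Fq)) := by
      have h3 := hdvd2
      rw [hbz] at h3
      simpa using h3
    have hdeg2 : (Polynomial.C f - g.map (Polynomial.C : Fq →+* Polynomial Fq)).degree
        = g.degree := by
      rw [← degree_neg, neg_sub]
      exact fm_Fdeg g f hg
    have haz : (Polynomial.C a : Polynomial (Polynomial Fq)) = 0 :=
      eq_zero_of_dvd_of_degree_lt hC
        (by rw [hdeg2]
            exact lt_of_le_of_lt Polynomial.degree_C_le (natDegree_pos_iff_degree_pos.mp hg))
    have ha0 : a = 0 := by simpa using haz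
    have h1 : Polynomial.derivative f = 0 := by
      rcases mul_eq_zero.mp (ha ▸ ha0) with h | h
      · exact absurd h hXq
      · exact h
    exact hbothne ⟨h1, h2⟩
  obtain ⟨T0, hTf, hTg⟩ := fm_main f g a b hf hg hdvd1
  have ha0 : a ≠ 0 := mul_ne_zero hXq hf'
  have hT0 : T0 ≠ 0 := fun h => ha0 (by rw [← hTf, h, Polynomial.zero_comp])
  refine ⟨T0 * Polynomial.C (T0.leadingCoeff)⁻¹, (T0.leadingCoeff)⁻¹,
    monic_mul_leadingCoeff_inv hT0, inv_ne_zero (leadingCoeff_ne_zero.mpr hT0), ?_, ?_⟩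
  · rw [Polynomial.mul_comp, Polynomial.C_comp, hTf, ha]; ring
  · rw [Polynomial.mul_comp, Polynomial.C_comp, hTg, hb]; ring
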